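/- Let $S$ be a numerical semigroup with multiplicity $m$, genus $g$, and Kunz coordinate vector $(k_1,\dots,k_{m-1})$. If for some $i \in [1,m-1]$ we have $k_i = 3$ and $3m + i$ is a minimal generator of $S$, then $g \geq 3m/2$. -/

import Mathlib

theorem stmt_17 (S : Set ℕ) (h0 : 0 ∈ S) (hadd : ∀ a ∈ S, ∀ b ∈ S, a + b ∈ S)
    (hfin : Sᶜ.Finite) (m g : ℕ) (hm2 : 2 ≤ m)
    (hm : sInf (S \ {0}) = m) (hg : Sᶜ.ncard = g)
    (x : ℕ → ℕ)
    (hx : ∀ i, 1 ≤ i → i ≤ m - 1 → x i * m + i ∈ S ∧ (x i - 1) * m + i ∉ S)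
    (i : ℕ) (hi1 : 1 ≤ i) (hi2 : i ≤ m - 1) (hxi : x i = 3)
    (hgen : 3 * m + i ∈ (S \ {0}) \ {y | ∃ a ∈ S \ {0}, ∃ b ∈ S \ {0}, y = a + b}) :
    (3 * m : ℚ) / 2 ≤ (g : ℚ) := by
  -- m ∈ S
  have hSinf : S.Infinite := by
    have := hfin.infinite_compl
    simpa using this
  have hSne : (S \ {0}).Nonempty := (hSinf.diff (Set.finite_singleton 0)).nonempty
  have hmS : m ∈ S := by
    have := Nat.sInf_mem hSne
    rw [hm] at this
    exact this.1
  -- upward closure along m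
  have hup : ∀ n ∈ S, ∀ a : ℕ, n + a * m ∈ S := by
    intro n hn a
    induction a with
    | zero => simpa using hn
    | succ a ih =>
      have := hadd _ ih _ hmS
      have heq : n + a * m + m = n + (a + 1) * m := by ring
      rwa [heq] at this
  have hmult : ∀ a : ℕ, a * m ∈ S := by
    intro a
    simpa using hup 0 h0 a
  have hx1 : ∀ j, 1 ≤ j → j ≤ m - 1 → 1 ≤ x j := by
    intro j h1 h2
    by_contra h
    have hx0 : x j = 0 := by omega
    have h1' := (hx j h1 h2).1
    have h2' := (hx j h1 h2).2
    rw [hx0] at h1' h2'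
    simp at h1' h2'
    exact h2' h1'
  have mem_iff : ∀ j, 1 ≤ j → j ≤ m - 1 → ∀ a : ℕ, (a * m + j ∈ S ↔ x j ≤ a) := by
    intro j h1 h2 a
    constructor
    · intro hS
      by_contra h
      push_neg at h
      have hmul : (x j - 1) * m = a * m + (x j - 1 - a) * m := by
        rw [← add_mul]; congr 1; omega
      have heq : a * m + j + (x j - 1 - a) * m = (x j - 1) * m + j := by
        rw [hmul]; ring
      have := hup _ hS (x j - 1 - a)
      rw [heq] at this
      exact (hx j h1 h2).2 this
    · intro h
      have hmul : a * m = x j * m + (a - x j) * m := by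
        rw [← add_mul]; congr 1; omega
      have heq : x j * m + j + (a - x j) * m = a * m + j := by
        rw [hmul]; ring
      have := hup _ (hx j h1 h2).1 (a - x j)
      rwa [heq] at this
  -- the complement as a finset
  set F : Finset ℕ :=
    (Finset.Icc 1 (m - 1)).biUnion
      (fun j => (Finset.range (x j)).image (fun a => a * m + j)) with hF
  have hcompl : Sᶜ = ↑F := by
    ext n
    simp only [Set.mem_compl_iff, hF, Finset.coe_biUnion, Set.mem_iUnion,
      Finset.mem_coe, Finset.mem_biUnion, Finset.mem_image, Finset.mem_range,
      Finset.mem_Icc]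
    constructor
    · intro hn
      have hmod : n % m ≠ 0 := by
        intro h
        have : n = (n / m) * m := (Nat.div_mul_cancel (Nat.dvd_of_mod_eq_zero h)).symm
        rw [this] at hn
        exact hn (hmult _)
      have hmodlt : n % m < m := Nat.mod_lt _ (by omega)
      refine ⟨n % m, ⟨by omega, by omega⟩, n / m, ?_, Nat.div_add_mod' n m⟩
      by_contra h
      push_neg at h
      have : (n / m) * m + n % m ∈ S := (mem_iff (n % m) (by omega) (by omega) (n / m)).mpr h
      have heq : (n / m) * m + n % m = n := Nat.div_add_mod' n m
      rw [heq] at this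
      exact hn this
    · rintro ⟨j, ⟨h1, h2⟩, a, ha, rfl⟩
      intro hS
      have := (mem_iff j h1 h2 a).mp hS
      omega
  have hcard : F.card = ∑ j ∈ Finset.Icc 1 (m - 1), x j := by
    rw [hF, Finset.card_biUnion]
    · apply Finset.sum_congr rfl
      intro j hj
      rw [Finset.card_image_of_injective, Finset.card_range]
      intro a b hab
      simp only at hab
      have : a * m = b * m := by omega
      exact Nat.eq_of_mul_eq_mul_right (by omega) this
    · intro j1 hj1 j2 hj2 hne
      simp only [Finset.mem_coe, Finset.mem_Icc, Function.onFun] at hj1 hj2 ⊢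
      rw [Finset.disjoint_left]
      intro n hn1 hn2
      simp only [Finset.mem_image, Finset.mem_range] at hn1 hn2
      obtain ⟨a1, _, he1⟩ := hn1
      obtain ⟨a2, _, he2⟩ := hn2
      apply hne
      have h1 : n % m = j1 := by
        rw [← he1, Nat.add_comm, Nat.add_mul_mod_self_right]
        exact Nat.mod_eq_of_lt (by omega)
      have h2 : n % m = j2 := by
        rw [← he2, Nat.add_comm, Nat.add_mul_mod_self_right]
        exact Nat.mod_eq_of_lt (by omega)
      omega
  have hgsum : g = ∑ j ∈ Finset.Icc 1 (m - 1), x j := by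
    rw [← hg, hcompl, Set.ncard_coe_finset, hcard]
  -- pairing involution
  set σ : ℕ → ℕ := fun j => if j < i then i - j else m + i - j with hσ
  set T : Finset ℕ := (Finset.Icc 1 (m - 1)).erase i with hT
  have hmemT : ∀ j, j ∈ T ↔ j ≠ i ∧ 1 ≤ j ∧ j ≤ m - 1 := by
    intro j
    simp [hT, Finset.mem_erase, Finset.mem_Icc]
  have hσmem : ∀ j ∈ T, σ j ∈ T := by
    intro j hj
    rw [hmemT] at hj ⊢
    simp only [hσ]
    split <;> omega
  have hσσ : ∀ j ∈ T, σ (σ j) = j := by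
    intro j hj
    rw [hmemT] at hj
    simp only [hσ]
    split_ifs <;> omega
  -- key inequality
  have hkey : ∀ j ∈ T, 3 ≤ x j + x (σ j) := by
    intro j hj
    have hj' := hσmem j hj
    rw [hmemT] at hj hj'
    have hcase : j + σ j = i ∨ j + σ j = m + i := by
      simp only [hσ]; split <;> omega
    have hS1 := (hx j hj.2.1 hj.2.2).1
    have hS2 := (hx (σ j) hj'.2.1 hj'.2.2).1
    have hsum := hadd _ hS1 _ hS2
    rcases hcase with hcase | hcase
    · have heq : (x j * m + j) + (x (σ j) * m + σ j) = (x j + x (σ j)) * m + i := by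
        rw [← hcase]; ring
      rw [heq] at hsum
      have := (mem_iff i hi1 hi2 _).mp hsum
      omega
    · by_contra h
      push_neg at h
      have h1 := hx1 j hj.2.1 hj.2.2
      have h2 := hx1 (σ j) hj'.2.1 hj'.2.2
      have hxj : x j = 1 := by omega
      have hxj' : x (σ j) = 1 := by omega
      apply hgen.2
      refine ⟨x j * m + j, ⟨hS1, by simp; omega⟩, x (σ j) * m + σ j, ⟨hS2, by simp; omega⟩, ?_⟩
      rw [hxj, hxj']
      omega
  -- conclude
  have hTmem_i : i ∈ Finset.Icc 1 (m - 1) := by simp [Finset.mem_Icc]; omega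
  have hsplit : ∑ j ∈ Finset.Icc 1 (m - 1), x j = x i + ∑ j ∈ T, x j := by
    rw [hT, Finset.add_sum_erase _ _ hTmem_i]
  have hswap : ∑ j ∈ T, x (σ j) = ∑ j ∈ T, x j := by
    apply Finset.sum_nbij' σ σ hσmem hσmem hσσ hσσ
    intro j hj
    rfl
  have hTcard : T.card = m - 2 := by
    rw [hT, Finset.card_erase_of_mem hTmem_i, Nat.card_Icc]
    omega
  have hlow : 3 * (m - 2) ≤ ∑ j ∈ T, (x j + x (σ j)) := by
    calc 3 * (m - 2) = ∑ _j ∈ T, 3 := by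
          rw [Finset.sum_const, hTcard, smul_eq_mul]; ring
      _ ≤ ∑ j ∈ T, (x j + x (σ j)) := Finset.sum_le_sum hkey
  rw [Finset.sum_add_distrib, hswap] at hlow
  have hfinal : 3 * m ≤ 2 * g := by
    rw [hgsum, hsplit, hxi]
    omega
  rw [div_le_iff₀ (by norm_num)]
  have : (3 * m : ℚ) ≤ 2 * g := by exact_mod_cast hfinal
  linarith
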